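/- Let τ₀, u₀, ν, F > 0, r > 0, s ≥ 0, and c > 0, and set c_s := τ₀^{-3/2}/√F and df_* := ((s+1)/r)·(u₀/τ₀). There exists a nonzero real k satisfying 0 = (s+1)/τ₀ − cr/u₀ + ik(c² − c_s²) − cνk²/τ₀² if and only if c = c_s and df_* > c_s. Moreover, in that case the set of nonzero real solutions k is exactly {k_H, −k_H}, where k_H := √( (τ₀² r / (c_s ν u₀)) · (df_* − c_s) ). -/

import Mathlib

private lemma reim_split (A B : ℝ) : ((0:ℂ) = A + Complex.I * B) ↔ (A = 0 ∧ B = 0) := by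
  rw [eq_comm, Complex.ext_iff]
  simp [Complex.ext_iff]

/-- Hopf bifurcation conditions for the viscous St. Venant equations: the
Fourier symbol of the linearized profile equation has a nonzero real root `k`
iff `c = c_s` and `df_* > c_s`, in which case the roots are exactly `±k_H`. -/
theorem stmt4 (τ₀ u₀ ν F r s c : ℝ) (hτ₀ : 0 < τ₀) (hu₀ : 0 < u₀) (hν : 0 < ν)
    (hF : 0 < F) (hr : 0 < r) (hs : 0 ≤ s) (hc : 0 < c)
    (cs : ℝ) (hcs : cs = τ₀ ^ (-(3 : ℝ) / 2) / Real.sqrt F)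
    (df : ℝ) (hdf : df = ((s + 1) / r) * (u₀ / τ₀))
    (kH : ℝ) (hkH : kH = Real.sqrt ((τ₀ ^ 2 * r / (cs * ν * u₀)) * (df - cs))) :
    ((∃ k : ℝ, k ≠ 0 ∧
        (0 : ℂ) = ((s : ℂ) + 1) / (τ₀ : ℂ) - (c : ℂ) * (r : ℂ) / (u₀ : ℂ)
          + Complex.I * (k : ℂ) * ((c : ℂ) ^ 2 - (cs : ℂ) ^ 2)
          - (c : ℂ) * (ν : ℂ) * (k : ℂ) ^ 2 / (τ₀ : ℂ) ^ 2)
      ↔ (c = cs ∧ df > cs))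
    ∧ (c = cs → df > cs → ∀ k : ℝ, k ≠ 0 →
        (((0 : ℂ) = ((s : ℂ) + 1) / (τ₀ : ℂ) - (c : ℂ) * (r : ℂ) / (u₀ : ℂ)
            + Complex.I * (k : ℂ) * ((c : ℂ) ^ 2 - (cs : ℂ) ^ 2)
            - (c : ℂ) * (ν : ℂ) * (k : ℂ) ^ 2 / (τ₀ : ℂ) ^ 2)
          ↔ (k = kH ∨ k = -kH))) := by
  have hcs0 : 0 < cs := by rw [hcs]; positivity
  have hτc : (τ₀ : ℂ) ≠ 0 := Complex.ofReal_ne_zero.mpr hτ₀.ne'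
  have huc : (u₀ : ℂ) ≠ 0 := Complex.ofReal_ne_zero.mpr hu₀.ne'
  have key : ∀ k : ℝ,
      ((0 : ℂ) = ((s : ℂ) + 1) / (τ₀ : ℂ) - (c : ℂ) * (r : ℂ) / (u₀ : ℂ)
          + Complex.I * (k : ℂ) * ((c : ℂ) ^ 2 - (cs : ℂ) ^ 2)
          - (c : ℂ) * (ν : ℂ) * (k : ℂ) ^ 2 / (τ₀ : ℂ) ^ 2)
      ↔ ((s + 1) / τ₀ - c * r / u₀ - c * ν * k ^ 2 / τ₀ ^ 2 = 0 ∧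
          k * (c ^ 2 - cs ^ 2) = 0) := by
    intro k
    rw [show ((s : ℂ) + 1) / (τ₀ : ℂ) - (c : ℂ) * (r : ℂ) / (u₀ : ℂ)
          + Complex.I * (k : ℂ) * ((c : ℂ) ^ 2 - (cs : ℂ) ^ 2)
          - (c : ℂ) * (ν : ℂ) * (k : ℂ) ^ 2 / (τ₀ : ℂ) ^ 2
        = (((s + 1) / τ₀ - c * r / u₀ - c * ν * k ^ 2 / τ₀ ^ 2 : ℝ) : ℂ)
          + Complex.I * ((k * (c ^ 2 - cs ^ 2) : ℝ) : ℂ) from by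
      push_cast; field_simp; ring]
    exact reim_split _ _
  have hkH2 : df > cs → kH ^ 2 = τ₀ ^ 2 * r / (cs * ν * u₀) * (df - cs) := by
    intro hdfcs
    rw [hkH, Real.sq_sqrt (mul_nonneg (by positivity) (by linarith))]
  constructor
  · constructor
    · rintro ⟨k, hk, heq⟩
      rw [key k] at heq
      obtain ⟨hA, hB⟩ := heq
      have hccs : c = cs := by
        rcases mul_eq_zero.mp hB with h | h
        · exact absurd h hk
        · nlinarith
      refine ⟨hccs, ?_⟩
      rw [hccs] at hA
      rw [hdf]
      have hk2 : 0 < k ^ 2 := by positivity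
      have h1 : cs * ν * k ^ 2 / τ₀ ^ 2 > 0 := by positivity
      have h2 : (s + 1) / τ₀ - cs * r / u₀ > 0 := by linarith
      rw [gt_iff_lt, ← sub_pos]
      have : (s + 1) / r * (u₀ / τ₀) - cs = (u₀ / r) * ((s + 1) / τ₀ - cs * r / u₀) := by
        field_simp
      rw [this]
      positivity
    · rintro ⟨hccs, hdfcs⟩
      have hkHpos : 0 < kH := by
        rw [hkH]
        exact Real.sqrt_pos.mpr (mul_pos (by positivity) (by linarith))
      refine ⟨kH, hkHpos.ne', ?_⟩
      rw [key kH]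
      refine ⟨?_, by rw [hccs]; ring⟩
      rw [hccs, hkH2 hdfcs, hdf]
      field_simp
      ring
  · intro hccs hdfcs k hk
    rw [key k, hccs]
    have hkHval : kH ^ 2 = ((s + 1) / τ₀ - cs * r / u₀) * τ₀ ^ 2 / (cs * ν) := by
      rw [hkH2 hdfcs, hdf]
      field_simp
    constructor
    · rintro ⟨hA, -⟩
      have hk2 : k ^ 2 = kH ^ 2 := by
        rw [hkHval]
        field_simp at hA ⊢
        linarith
      have h0 : (k - kH) * (k + kH) = 0 := by linear_combination hk2
      rcases mul_eq_zero.mp h0 with h | h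
      · exact Or.inl (by linarith)
      · exact Or.inr (by linarith)
    · rintro (h | h)
      · refine ⟨?_, by rw [h]; ring⟩
        rw [h, hkHval]
        field_simp
        ring
      · refine ⟨?_, by rw [h]; ring⟩
        rw [h, show (-kH) ^ 2 = kH ^ 2 by ring, hkHval]
        field_simp
        ring
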